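/- Let n ≥ 2 be an integer and b > 0. Let u : (0,b) → ℝ be a continuous positive viscosity supersolution of −ψ''ψ = (n−1)(1 + (ψ'/(n−1))²) on (0,b), and let φ : (0,b) → ℝ be a positive C² function satisfying −φ''(β)φ(β) = (n−1)(1 + (φ'(β)/(n−1))²) for all β ∈ (0,b). Assume u(β) ≤ φ(β) for all β ∈ (0,b) and lim_{β→0⁺} u(β)/φ(β) = 1. Then the function β ↦ u(β)/φ(β) is monotone non-increasing on (0,b). -/

import Mathlib

open Filter

/-- `u` is a viscosity supersolution of `−ψ''ψ = (n−1)(k + (ψ'/(n−1))²)` on `I`: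
for every `β₀ ∈ I` and every `C²` test function `ψ` with `ψ ≤ u` near `β₀` (within `I`)
and `ψ(β₀) = u(β₀)`, one has `−ψ''(β₀)ψ(β₀) ≥ (n−1)(k + (ψ'(β₀)/(n−1))²)`. -/
def IsViscositySupersolution2 (n : ℕ) (k : ℝ) (I : Set ℝ) (u : ℝ → ℝ) : Prop :=
  ∀ β₀ ∈ I, ∀ ψ : ℝ → ℝ, ContDiffAt ℝ 2 ψ β₀ →
    (∀ᶠ β in nhdsWithin β₀ I, ψ β ≤ u β) → ψ β₀ = u β₀ →
    -(deriv (deriv ψ) β₀) * ψ β₀ ≥ ((n : ℝ) - 1) * (k + (deriv ψ β₀ / ((n : ℝ) - 1)) ^ 2)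

private lemma ratio_aux_contra (c m N P Φ : ℝ) (hc0 : 0 < c) (hc1 : c < 1)
    (hm : m < 0) (hN : 1 ≤ N) (hP : 0 ≤ P) (hΦ : 0 < Φ)
    (hkey : N * (1 + c ^ 2 * P) * Φ ≤ c * (c * Φ + m) * (N * (1 + P))) : False := by
  have hNpos : (0 : ℝ) < N := by linarith
  have h1P : (0 : ℝ) < 1 + P := by linarith
  have hfac : 0 < c * (N * (1 + P)) := mul_pos hc0 (mul_pos hNpos h1P)
  have t1 : c * (c * Φ + m) * (N * (1 + P)) < c * (c * Φ) * (N * (1 + P)) := by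
    nlinarith [hfac, hm]
  nlinarith [hkey, t1, mul_pos (mul_pos hNpos hΦ)
    (mul_pos (sub_pos.mpr hc1) (show (0:ℝ) < 1 + c by linarith))]

theorem ratio_monotone_nonincreasing
    (n : ℕ) (hn : 2 ≤ n) (b : ℝ) (hb : 0 < b)
    (u φ : ℝ → ℝ)
    (hu_cont : ContinuousOn u (Set.Ioo 0 b))
    (hu_pos : ∀ β ∈ Set.Ioo (0 : ℝ) b, 0 < u β)
    (hu_visc : IsViscositySupersolution2 n 1 (Set.Ioo 0 b) u)
    (hφ_pos : ∀ β ∈ Set.Ioo (0 : ℝ) b, 0 < φ β)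
    (hφ_C2 : ∀ β ∈ Set.Ioo (0 : ℝ) b, ContDiffAt ℝ 2 φ β)
    (hφ_eq : ∀ β ∈ Set.Ioo (0 : ℝ) b, -(deriv (deriv φ) β) * φ β
      = ((n : ℝ) - 1) * (1 + (deriv φ β / ((n : ℝ) - 1)) ^ 2))
    (hle : ∀ β ∈ Set.Ioo (0 : ℝ) b, u β ≤ φ β)
    (hlim : Filter.Tendsto (fun β => u β / φ β)
      (nhdsWithin 0 (Set.Ioo (0 : ℝ) b)) (nhds 1)) :
    AntitoneOn (fun β => u β / φ β) (Set.Ioo 0 b) := by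
  intro β₁ hβ₁ β₂ hβ₂ h12
  by_contra hcon
  push_neg at hcon
  -- hcon : u β₁ / φ β₁ < u β₂ / φ β₂
  have hφ1 := hφ_pos β₁ hβ₁
  have hφ2 := hφ_pos β₂ hβ₂
  have hu1 := hu_pos β₁ hβ₁
  set c : ℝ := (u β₁ / φ β₁ + u β₂ / φ β₂) / 2 with hc_def
  have hc_lt : u β₁ / φ β₁ < c := by
    simp only [hc_def]; linarith
  have hc_gt : c < u β₂ / φ β₂ := by
    simp only [hc_def]; linarith
  have hc_pos : 0 < c := lt_trans (div_pos hu1 hφ1) hc_lt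
  have hw2_le : u β₂ / φ β₂ ≤ 1 := by
    rw [div_le_one hφ2]; exact hle β₂ hβ₂
  have hc_lt1 : c < 1 := lt_of_lt_of_le hc_gt hw2_le
  -- near 0 the ratio exceeds c
  have hev : ∀ᶠ x in nhdsWithin 0 (Set.Ioo (0:ℝ) b), c < u x / φ x :=
    hlim.eventually (eventually_gt_nhds hc_lt1)
  rw [Filter.eventually_iff, Metric.mem_nhdsWithin_iff] at hev
  obtain ⟨δ, hδ, hball⟩ := hev
  -- pick a point a < β₁ with ratio > c
  set a : ℝ := min (δ / 2) (β₁ / 2) with ha_def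
  have ha_pos : 0 < a := lt_min (by linarith) (by linarith [hβ₁.1])
  have ha_lt1 : a < β₁ := lt_of_le_of_lt (min_le_right _ _) (by linarith [hβ₁.1])
  have haI : a ∈ Set.Ioo (0:ℝ) b := ⟨ha_pos, lt_trans ha_lt1 hβ₁.2⟩
  have ha_ratio : c < u a / φ a := by
    refine hball ⟨?_, haI⟩
    simp only [Metric.mem_ball, Real.dist_eq, sub_zero, abs_of_pos ha_pos]
    exact lt_of_le_of_lt (min_le_left _ _) (by linarith)
  have h12' : β₁ < β₂ := by
    rcases lt_or_eq_of_le h12 with h | h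
    · exact h
    · exact absurd hcon (by rw [h]; exact lt_irrefl _)
  have ha2 : a < β₂ := lt_trans ha_lt1 h12'
  have hKsub : Set.Icc a β₂ ⊆ Set.Ioo (0:ℝ) b := fun x hx =>
    ⟨lt_of_lt_of_le ha_pos hx.1, lt_of_le_of_lt hx.2 hβ₂.2⟩
  -- minimize f = u - c φ on [a, β₂]
  set f : ℝ → ℝ := fun β => u β - c * φ β with hf_def
  have hφ_cont : ContinuousOn φ (Set.Icc a β₂) := fun x hx =>
    ((hφ_C2 x (hKsub hx)).continuousAt).continuousWithinAt
  have hf_cont : ContinuousOn f (Set.Icc a β₂) :=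
    (hu_cont.mono hKsub).sub (continuousOn_const.mul hφ_cont)
  obtain ⟨β₀, hβ₀K, hmin⟩ :=
    isCompact_Icc.exists_isMinOn (Set.nonempty_Icc.mpr ha2.le) hf_cont
  set m : ℝ := f β₀ with hm_def
  have hβ₁K : β₁ ∈ Set.Icc a β₂ := ⟨ha_lt1.le, h12⟩
  have hm_neg : m < 0 := by
    have h1 : f β₁ < 0 := by
      have : u β₁ < c * φ β₁ := by
        rw [div_lt_iff₀ hφ1] at hc_lt; linarith
      simp only [hf_def]; linarith
    exact lt_of_le_of_lt (hmin hβ₁K) h1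
  have hfa : 0 < f a := by
    have : c * φ a < u a := by
      rw [lt_div_iff₀ (hφ_pos a haI)] at ha_ratio; linarith
    simp only [hf_def]; linarith
  have hfβ₂ : 0 < f β₂ := by
    have : c * φ β₂ < u β₂ := by
      rw [lt_div_iff₀ hφ2] at hc_gt; linarith
    simp only [hf_def]; linarith
  have hβ₀_int : β₀ ∈ Set.Ioo a β₂ := by
    rcases hβ₀K.1.lt_or_eq with h | h
    · rcases hβ₀K.2.lt_or_eq with h' | h'
      · exact ⟨h, h'⟩
      · exfalso; rw [hm_def, h'] at hm_neg; linarith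
    · exfalso; rw [hm_def, ← h] at hm_neg; linarith
  have hβ₀I : β₀ ∈ Set.Ioo 0 b := hKsub hβ₀K
  have hφ0_pos := hφ_pos β₀ hβ₀I
  -- the test function
  set ψ : ℝ → ℝ := fun β => c * φ β + m with hψ_def
  have hψC2 : ContDiffAt ℝ 2 ψ β₀ :=
    (contDiffAt_const.mul (hφ_C2 β₀ hβ₀I)).add contDiffAt_const
  have hψle : ∀ᶠ β in nhdsWithin β₀ (Set.Ioo 0 b), ψ β ≤ u β := by
    apply Filter.Eventually.filter_mono nhdsWithin_le_nhds
    filter_upwards [isOpen_Ioo.mem_nhds hβ₀_int] with x hx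
    have hxK : x ∈ Set.Icc a β₂ := ⟨hx.1.le, hx.2.le⟩
    have h' : u β₀ - c * φ β₀ ≤ u x - c * φ x := hmin hxK
    show c * φ x + m ≤ u x
    rw [hm_def, hf_def]
    simp only []
    linarith
  have hψeq : ψ β₀ = u β₀ := by simp only [hψ_def, hm_def, hf_def]; ring
  -- derivatives of ψ
  have hdψ_ev : deriv ψ =ᶠ[nhds β₀] fun x => c * deriv φ x := by
    filter_upwards [isOpen_Ioo.mem_nhds hβ₀I] with x hx
    have hdiff : DifferentiableAt ℝ φ x :=
      (hφ_C2 x hx).differentiableAt (by norm_num)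
    simp only [hψ_def]
    rw [deriv_add_const, deriv_const_mul _ hdiff]
  have hdψ : deriv ψ β₀ = c * deriv φ β₀ := hdψ_ev.self_of_nhds
  have hφ'diff : DifferentiableAt ℝ (deriv φ) β₀ := by
    have hφOn : ContDiffOn ℝ 2 φ (Set.Ioo 0 b) := fun x hx => (hφ_C2 x hx).contDiffWithinAt
    have hd1 : ContDiffOn ℝ 1 (deriv φ) (Set.Ioo 0 b) :=
      hφOn.deriv_of_isOpen isOpen_Ioo (by norm_num)
    exact ((hd1.differentiableOn one_ne_zero) β₀ hβ₀I).differentiableAt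
      (isOpen_Ioo.mem_nhds hβ₀I)
  have hddψ : deriv (deriv ψ) β₀ = c * deriv (deriv φ) β₀ := by
    rw [hdψ_ev.deriv_eq, deriv_const_mul _ hφ'diff]
  -- apply the supersolution property
  have hineq := hu_visc β₀ hβ₀I ψ hψC2 hψle hψeq
  rw [hddψ, hdψ, hψeq] at hineq
  have hueq : u β₀ = c * φ β₀ + m := by simp only [hm_def, hf_def]; ring
  have hφeq := hφ_eq β₀ hβ₀I
  set N : ℝ := (n : ℝ) - 1 with hN_def
  have hN : 1 ≤ N := by
    have : (2 : ℝ) ≤ (n : ℝ) := by exact_mod_cast hn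
    simp only [hN_def]; linarith
  have hNpos : 0 < N := by linarith
  set P : ℝ := (deriv φ β₀ / N) ^ 2 with hP_def
  have hP : 0 ≤ P := sq_nonneg _
  have hexp : (c * deriv φ β₀ / N) ^ 2 = c ^ 2 * P := by
    rw [hP_def]; field_simp
  rw [hexp, hueq] at hineq
  have h3 : N * (1 + c ^ 2 * P) * φ β₀ ≤ -(c * deriv (deriv φ) β₀) * (c * φ β₀ + m) * φ β₀ :=
    mul_le_mul_of_nonneg_right hineq hφ0_pos.le
  have h4 : -(c * deriv (deriv φ) β₀) * (c * φ β₀ + m) * φ β₀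
      = c * (c * φ β₀ + m) * (N * (1 + P)) := by
    rw [hP_def, ← hφeq]; ring
  rw [h4] at h3
  exact ratio_aux_contra c m N P (φ β₀) hc_pos hc_lt1 hm_neg hN hP hφ0_pos h3
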